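/- Let z : ℝ → ℂ^N be a differentiable solution of the damped and driven dNLS. Then the total energy E(t) = Σ_{j=1}^N ½|z_j(t)|² satisfies d/dt E(t) = β|z_1(t)|² − γ|z_N(t)|² for every t ∈ ℝ. In particular, if β = 0 and γ ≥ 0 then the total energy is non-increasing. -/

import Mathlib

/-- The discrete Laplacian on `Fin N → ℂ` with the boundary conventions
`(Δz)_1 = z_2 − z_1`, `(Δz)_N = z_{N−1} − z_N`. -/
def lapC {N : ℕ} (z : Fin N → ℂ) (j : Fin N) : ℂ :=
  (if h : j.val + 1 < N then z ⟨j.val + 1, h⟩ else z j)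
  + (if 0 < j.val then z ⟨j.val - 1, lt_of_le_of_lt (Nat.sub_le _ _) j.isLt⟩ else z j)
  - 2 * z j

/-- The right-hand side of the damped and driven dNLS:
`V(z)_j = i(−ε(Δz)_j + |z_j|² z_j) + β δ_{j,1} z_1 − γ δ_{j,N} z_N`. -/
def Vfield (N : ℕ) (ε β γ : ℝ) (z : Fin N → ℂ) : Fin N → ℂ := fun j =>
  Complex.I * (-(ε : ℂ) * lapC z j + (Complex.normSq (z j) : ℂ) * z j)
    + (if j.val = 0 then (β : ℂ) * z j else 0)
    - (if j.val = N - 1 then (γ : ℂ) * z j else 0)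

lemma lap_sum_im {N : ℕ} (hN : 1 ≤ N) (w : Fin N → ℂ) :
    ∑ j : Fin N, ((starRingEnd ℂ) (w j) * lapC w j).im = 0 := by
  obtain ⟨n, rfl⟩ : ∃ n, N = n + 1 := ⟨N - 1, by omega⟩
  set w' : ℕ → ℂ := fun k => if h : k < n + 1 then w ⟨k, h⟩ else 0 with hw'
  have hterm : ∀ j : Fin (n + 1), ((starRingEnd ℂ) (w j) * lapC w j).im
      = (if (j : ℕ) + 1 < n + 1 then ((starRingEnd ℂ) (w' j) * w' ((j : ℕ) + 1)).im else 0)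
      + (if 0 < (j : ℕ) then ((starRingEnd ℂ) (w' j) * w' ((j : ℕ) - 1)).im else 0) := by
    intro j
    have hj : (j : ℕ) < n + 1 := j.isLt
    have hjm : (j : ℕ) - 1 < n + 1 := by omega
    simp only [lapC]
    split_ifs with h1 h2 h2 <;>
      simp only [hw', hj, h1, h2, hjm, dif_pos, if_pos, if_neg, Fin.eta,
        Complex.mul_im, Complex.add_im, Complex.add_re, Complex.sub_im, Complex.sub_re,
        Complex.conj_re, Complex.conj_im, Complex.im_ofNat, Complex.re_ofNat,
        Complex.mul_re] <;> ring
  calc ∑ j : Fin (n+1), ((starRingEnd ℂ) (w j) * lapC w j).im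
      = ∑ k ∈ Finset.range (n+1),
          ((if k + 1 < n + 1 then ((starRingEnd ℂ) (w' k) * w' (k + 1)).im else 0)
          + (if 0 < k then ((starRingEnd ℂ) (w' k) * w' (k - 1)).im else 0)) := by
        rw [← Fin.sum_univ_eq_sum_range (fun k =>
          (if k + 1 < n + 1 then ((starRingEnd ℂ) (w' k) * w' (k + 1)).im else 0)
          + (if 0 < k then ((starRingEnd ℂ) (w' k) * w' (k - 1)).im else 0)) (n+1)]
        exact Finset.sum_congr rfl fun j _ => hterm j
    _ = 0 := by
        rw [Finset.sum_add_distrib]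
        have hA : ∑ k ∈ Finset.range (n+1),
            (if k + 1 < n + 1 then ((starRingEnd ℂ) (w' k) * w' (k + 1)).im else 0)
            = ∑ k ∈ Finset.range n, ((starRingEnd ℂ) (w' k) * w' (k + 1)).im := by
          rw [Finset.sum_range_succ]
          simp only [lt_irrefl, add_lt_add_iff_right, if_false]
          rw [add_zero]
          exact Finset.sum_congr rfl fun k hk => by
            have := Finset.mem_range.mp hk
            rw [if_pos (by omega)]
        have hB : ∑ k ∈ Finset.range (n+1),
            (if 0 < k then ((starRingEnd ℂ) (w' k) * w' (k - 1)).im else 0)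
            = ∑ k ∈ Finset.range n, ((starRingEnd ℂ) (w' (k + 1)) * w' k).im := by
          rw [Finset.sum_range_succ']
          simp
        rw [hA, hB, ← Finset.sum_add_distrib]
        apply Finset.sum_eq_zero
        intro k _
        simp [Complex.mul_im]; ring


/-- The total energy `E(t) = Σ_j ½|z_j(t)|²` of a solution of the damped and
driven dNLS satisfies `E′ = β|z_1|² − γ|z_N|²`; in particular it is
non-increasing when `β = 0` and `γ ≥ 0`. -/
theorem stmt_10 (N : ℕ) (hN : 2 ≤ N) (ε β γ : ℝ) (z : ℝ → Fin N → ℂ)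
    (hz : ∀ t : ℝ, ∀ j : Fin N,
      HasDerivAt (fun s => z s j) (Vfield N ε β γ (z t) j) t) :
    (∀ t : ℝ,
      HasDerivAt (fun s => ∑ j : Fin N, (1 / 2 : ℝ) * Complex.normSq (z s j))
        (β * Complex.normSq (z t ⟨0, by omega⟩)
          - γ * Complex.normSq (z t ⟨N - 1, by omega⟩)) t) ∧
    (β = 0 → 0 ≤ γ →
      Antitone (fun t => ∑ j : Fin N, (1 / 2 : ℝ) * Complex.normSq (z t j))) := by
  have hE : ∀ t : ℝ,
      HasDerivAt (fun s => ∑ j : Fin N, (1 / 2 : ℝ) * Complex.normSq (z s j))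
        (β * Complex.normSq (z t ⟨0, by omega⟩)
          - γ * Complex.normSq (z t ⟨N - 1, by omega⟩)) t := by
    intro t
    set w : Fin N → ℂ := z t with hw
    set V : Fin N → ℂ := Vfield N ε β γ w with hV
    have h1 : ∀ j : Fin N, HasDerivAt (fun s => (1 / 2 : ℝ) * Complex.normSq (z s j))
        (((starRingEnd ℂ) (w j) * V j).re) t := by
      intro j
      have hre : HasDerivAt (fun s => (z s j).re) (V j).re t :=
        (Complex.reCLM.hasFDerivAt.comp_hasDerivAt t (hz t j))
      have him : HasDerivAt (fun s => (z s j).im) (V j).im t :=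
        (Complex.imCLM.hasFDerivAt.comp_hasDerivAt t (hz t j))
      have h2 := (((hre.fun_mul hre).fun_add (him.fun_mul him)).const_mul (1 / 2 : ℝ))
      have hfun : (fun s => (1 / 2 : ℝ) * Complex.normSq (z s j))
          = fun y => 1 / 2 * ((z y j).re * (z y j).re + (z y j).im * (z y j).im) := by
        funext s; simp [Complex.normSq_apply]
      rw [hfun]
      refine h2.congr_deriv ?_
      simp only [Complex.mul_re, Complex.conj_re, Complex.conj_im]; ring
    have hsum : HasDerivAt (fun s => ∑ j : Fin N, (1 / 2 : ℝ) * Complex.normSq (z s j))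
        (∑ j : Fin N, ((starRingEnd ℂ) (w j) * V j).re) t :=
      HasDerivAt.fun_sum (fun j _ => h1 j)
    convert hsum using 1
    have hterm : ∀ j : Fin N, ((starRingEnd ℂ) (w j) * V j).re
        = ε * ((starRingEnd ℂ) (w j) * lapC w j).im
          + (if j = (⟨0, by omega⟩ : Fin N) then β * Complex.normSq (w j) else 0)
          - (if j = (⟨N - 1, by omega⟩ : Fin N) then γ * Complex.normSq (w j) else 0) := by
      intro j
      have e0 : ((j : ℕ) = 0) = (j = (⟨0, by omega⟩ : Fin N)) := by
        simp [Fin.ext_iff]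
      have e1 : ((j : ℕ) = N - 1) = (j = (⟨N - 1, by omega⟩ : Fin N)) := by
        simp [Fin.ext_iff]
      rw [hV, Vfield]
      simp only [e0, e1]
      set L := lapC w j with hL
      split_ifs with h1 h2 h2 <;>
        simp [Complex.mul_re, Complex.mul_im, Complex.normSq_apply, Complex.add_re,
          Complex.add_im, Complex.sub_re, Complex.sub_im, Complex.I_re, Complex.I_im,
          Complex.ofReal_re, Complex.ofReal_im, Complex.conj_re, Complex.conj_im] <;>
        ring
    rw [Finset.sum_congr rfl (fun j _ => hterm j)]
    have hz0 : ∑ j : Fin N, (if j = (⟨0, by omega⟩ : Fin N) then β * Complex.normSq (w j) else 0)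
        = β * Complex.normSq (w ⟨0, by omega⟩) := by
      rw [Finset.sum_ite_eq' Finset.univ]; simp
    have hzN : ∑ j : Fin N, (if j = (⟨N - 1, by omega⟩ : Fin N) then γ * Complex.normSq (w j) else 0)
        = γ * Complex.normSq (w ⟨N - 1, by omega⟩) := by
      rw [Finset.sum_ite_eq' Finset.univ]; simp
    rw [Finset.sum_sub_distrib, Finset.sum_add_distrib, hz0, hzN, ← Finset.mul_sum,
      lap_sum_im (by omega) w, mul_zero, zero_add]
  refine ⟨hE, fun hβ hγ => ?_⟩
  apply antitone_of_deriv_nonpos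
  · exact fun t => (hE t).differentiableAt
  · intro t
    rw [(hE t).deriv, hβ]
    have := Complex.normSq_nonneg (z t ⟨N - 1, by omega⟩)
    nlinarith
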